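/- Let n ≥ 1 and let t = 0^{n-j} s where 1 ≤ j ≤ n and s is the autocorrelation of some word of length j over alphabet Σ with |Σ| = σ ≥ 2. Then the cardinality of the right population P_r(t) = { v ∈ Σ^n : there exists u ∈ Σ^n with c(u,v) = t } equals p(s)·σ^{n-j}, where p(s) is the number of words of length j with autocorrelation s. -/

import Mathlib

/-- Correlation of two words of length `m` (as functions `Fin m → α`):
bit `i` is `1` iff `u[i+k] = v[k]` for all `k` with `i + k < m`. -/
def corrF {α : Type*} [DecidableEq α] {m : ℕ} (u v : Fin m → α) : Fin m → Bool :=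
  fun i => decide (∀ j k : Fin m, (j : ℕ) = (i : ℕ) + (k : ℕ) → u j = v k)

private lemma corr_shift {α : Type*} [DecidableEq α] {n j : ℕ} (hjn : j ≤ n)
    (u v : Fin n → α)
    (hsuf : ∀ m : ℕ, (hm : m < j) → u ⟨n - j + m, by omega⟩ = v ⟨m, by omega⟩)
    (k : Fin j) :
    corrF u v ⟨n - j + (k : ℕ), (Nat.add_lt_add_left k.isLt (n - j)).trans_le (Nat.sub_add_cancel hjn).le⟩ =
    corrF (fun a : Fin j => v ⟨(a : ℕ), by have := a.isLt; omega⟩)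
          (fun a : Fin j => v ⟨(a : ℕ), by have := a.isLt; omega⟩) k := by
  simp only [corrF, decide_eq_decide]
  constructor
  · intro h a b hab
    have hab' : (a : ℕ) = (k : ℕ) + (b : ℕ) := hab
    have hk := k.isLt
    have ha := a.isLt
    have hb := b.isLt
    have h1 := h ⟨n - j + (a : ℕ), by omega⟩ ⟨(b : ℕ), by omega⟩
      (show n - j + (a : ℕ) = (n - j + (k : ℕ)) + (b : ℕ) by omega)
    have h2 := hsuf (a : ℕ) a.isLt
    exact h2.symm.trans h1
  · intro h a b hab
    have hab' : (a : ℕ) = (n - j + (k : ℕ)) + (b : ℕ) := hab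
    have hk := k.isLt
    have ha := a.isLt
    have hb : (k : ℕ) + (b : ℕ) < j := by omega
    have h2 := hsuf ((k : ℕ) + (b : ℕ)) hb
    have h1 := h ⟨(k : ℕ) + (b : ℕ), hb⟩ ⟨(b : ℕ), by omega⟩
      (show (k : ℕ) + (b : ℕ) = (k : ℕ) + (b : ℕ) from rfl)
    have ha' : a = (⟨n - j + ((k : ℕ) + (b : ℕ)), by omega⟩ : Fin n) :=
      Fin.ext (show (a : ℕ) = n - j + ((k : ℕ) + (b : ℕ)) by omega)
    rw [ha']
    exact h2.trans h1

private lemma key_iff {α : Type*} [DecidableEq α] [Fintype α] (hσ : 2 ≤ Fintype.card α)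
    {n j : ℕ} (hj : 1 ≤ j) (hjn : j ≤ n) (s : Fin j → Bool)
    (hs0 : s ⟨0, hj⟩ = true)
    (t : Fin n → Bool)
    (htz : ∀ i : Fin n, (i : ℕ) < n - j → t i = false)
    (hts : ∀ i : Fin j, t ⟨n - j + (i : ℕ), (Nat.add_lt_add_left i.isLt (n - j)).trans_le (Nat.sub_add_cancel hjn).le⟩ = s i)
    (v : Fin n → α) :
    (∃ u : Fin n → α, corrF u v = t) ↔
      corrF (fun a : Fin j => v ⟨(a : ℕ), by have := a.isLt; omega⟩)
            (fun a : Fin j => v ⟨(a : ℕ), by have := a.isLt; omega⟩) = s := by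
  constructor
  · rintro ⟨u, hu⟩
    have h0 : corrF u v ⟨n - j + (0 : ℕ), by omega⟩ = true := by
      rw [hu]
      have := hts ⟨0, hj⟩
      exact this.trans hs0
    have H : ∀ a b : Fin n, (a : ℕ) = (n - j + 0) + (b : ℕ) → u a = v b :=
      of_decide_eq_true h0
    have hsuf : ∀ m : ℕ, (hm : m < j) → u ⟨n - j + m, by omega⟩ = v ⟨m, by omega⟩ := by
      intro m hm
      exact H ⟨n - j + m, by omega⟩ ⟨m, by omega⟩
        (show n - j + m = (n - j + 0) + m by omega)
    funext k
    have hcs := corr_shift hjn u v hsuf k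
    rw [← hcs, hu]
    exact hts k
  · intro hpp
    obtain ⟨a0, b0, hab0⟩ := Fintype.exists_pair_of_one_lt_card
      (show 1 < Fintype.card α by omega)
    have hn0 : 0 < n := by omega
    have hbad : ∃ c : α, c ≠ v ⟨0, hn0⟩ := by
      by_cases h : v ⟨0, hn0⟩ = a0
      · exact ⟨b0, by rw [h]; exact fun hh => hab0 hh.symm⟩
      · exact ⟨a0, fun hh => h hh.symm⟩
    obtain ⟨bad, hbad⟩ := hbad
    set u : Fin n → α := fun i : Fin n =>
      if h : (i : ℕ) < n - j then bad
      else v ⟨(i : ℕ) - (n - j), by have := i.isLt; omega⟩ with hudef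
    have hsuf : ∀ m : ℕ, (hm : m < j) → u ⟨n - j + m, by omega⟩ = v ⟨m, by omega⟩ := by
      intro m hm
      have : u ⟨n - j + m, by omega⟩ =
          if h : n - j + m < n - j then bad
          else v ⟨n - j + m - (n - j), by omega⟩ := rfl
      rw [this, dif_neg (show ¬ (n - j + m < n - j) by omega)]
      exact congrArg v (Fin.ext (show n - j + m - (n - j) = m by omega))
    refine ⟨u, funext fun i => ?_⟩
    by_cases hi : (i : ℕ) < n - j
    · rw [htz i hi]
      apply decide_eq_false
      intro H
      have h1 : u i = v ⟨0, hn0⟩ := H i ⟨0, hn0⟩ (show (i : ℕ) = (i : ℕ) + 0 by omega)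
      have h2 : u i = bad := by
        have : u i = if h : (i : ℕ) < n - j then bad
            else v ⟨(i : ℕ) - (n - j), by have := i.isLt; omega⟩ := rfl
        rw [this, dif_pos hi]
      exact hbad (h2 ▸ h1)
    · have hik : (i : ℕ) < n := i.isLt
      have hkj : (i : ℕ) - (n - j) < j := by omega
      have hie : i = (⟨n - j + ((⟨(i : ℕ) - (n - j), hkj⟩ : Fin j) : ℕ),
          by have := hkj; omega⟩ : Fin n) :=
        Fin.ext (show (i : ℕ) = n - j + ((i : ℕ) - (n - j)) by omega)
      rw [hie, corr_shift hjn u v hsuf ⟨(i : ℕ) - (n - j), hkj⟩, hpp]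
      exact (hts ⟨(i : ℕ) - (n - j), hkj⟩).symm

/-- The right population of `t = 0^{n-j} s` has cardinality `p(s) · σ^{n-j}`. -/
theorem stmt8 {α : Type*} [DecidableEq α] [Fintype α] (hσ : 2 ≤ Fintype.card α)
    (n j : ℕ) (hj : 1 ≤ j) (hjn : j ≤ n) (s : Fin j → Bool)
    (hs : ∃ z : Fin j → α, corrF z z = s)
    (t : Fin n → Bool)
    (htz : ∀ i : Fin n, (i : ℕ) < n - j → t i = false)
    (hts : ∀ i : Fin j, t ⟨n - j + (i : ℕ), by have := i.isLt; omega⟩ = s i) :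
    Nat.card {v : Fin n → α // ∃ u : Fin n → α, corrF u v = t} =
      Nat.card {z : Fin j → α // corrF z z = s} * Fintype.card α ^ (n - j) := by
  obtain ⟨z0, hz0⟩ := hs
  have hs0 : s ⟨0, hj⟩ = true := by
    rw [← hz0]
    apply decide_eq_true
    intro a b h
    have h' : (a : ℕ) = 0 + (b : ℕ) := h
    exact congrArg z0 (Fin.ext (by omega))
  have e1 : {v : Fin n → α // ∃ u : Fin n → α, corrF u v = t} ≃
      {v : Fin n → α // corrF (fun a : Fin j => v ⟨(a : ℕ), by have := a.isLt; omega⟩)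
        (fun a : Fin j => v ⟨(a : ℕ), by have := a.isLt; omega⟩) = s} :=
    Equiv.subtypeEquivRight (fun v => key_iff hσ hj hjn s hs0 t htz hts v)
  have e2 : {v : Fin n → α // corrF (fun a : Fin j => v ⟨(a : ℕ), by have := a.isLt; omega⟩)
        (fun a : Fin j => v ⟨(a : ℕ), by have := a.isLt; omega⟩) = s} ≃
      ({z : Fin j → α // corrF z z = s} × (Fin (n - j) → α)) :=
    { toFun := fun vp => (⟨fun a : Fin j => vp.1 ⟨(a : ℕ), by have := a.isLt; omega⟩, vp.2⟩,
        fun m : Fin (n - j) => vp.1 ⟨j + (m : ℕ), by have := m.isLt; omega⟩)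
      invFun := fun zw => ⟨fun i : Fin n =>
        if h : (i : ℕ) < j then zw.1.1 ⟨(i : ℕ), h⟩
        else zw.2 ⟨(i : ℕ) - j, by have := i.isLt; omega⟩, by
          have hpre : (fun a : Fin j => (fun i : Fin n =>
              if h : (i : ℕ) < j then zw.1.1 ⟨(i : ℕ), h⟩
              else zw.2 ⟨(i : ℕ) - j, by have := i.isLt; omega⟩)
                ⟨(a : ℕ), by have := a.isLt; omega⟩) = zw.1.1 := by
            funext a
            exact dif_pos a.isLt
          rw [hpre]
          exact zw.1.2⟩
      left_inv := fun vp => by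
        apply Subtype.ext
        funext i
        show (if h : (i : ℕ) < j then vp.1 ⟨(i : ℕ), by have := i.isLt; omega⟩
          else vp.1 ⟨j + ((i : ℕ) - j), by have := i.isLt; omega⟩) = vp.1 i
        by_cases h : (i : ℕ) < j
        · rw [dif_pos h]
        · rw [dif_neg h]
          exact congrArg vp.1 (Fin.ext (show j + ((i : ℕ) - j) = (i : ℕ) by omega))
      right_inv := fun zw => by
        refine Prod.ext ?_ ?_
        · apply Subtype.ext
          funext a
          exact dif_pos a.isLt
        · funext m
          show (if h : j + (m : ℕ) < j then zw.1.1 ⟨j + (m : ℕ), h⟩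
            else zw.2 ⟨j + (m : ℕ) - j, by have := m.isLt; omega⟩) = zw.2 m
          rw [dif_neg (show ¬ (j + (m : ℕ) < j) by omega)]
          exact congrArg zw.2 (Fin.ext (show j + (m : ℕ) - j = (m : ℕ) by omega)) }
  rw [Nat.card_congr (e1.trans e2), Nat.card_prod]
  congr 1
  simp [Nat.card_eq_fintype_card]
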